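/- arXiv:1502.06515 — 2 statements merged into one kernel-verified Lean document; each statement's English description precedes it below -/
import Mathlib

section
/- Let C_I > 0 and let γ be a real number with 0 < γ < 1/C_I. Then there exists a constant C > 0, depending only on γ and C_I, such that the following holds: for every real inner product space H, every finite index set ι, every family of positive reals (h_i)_{i∈ι}, every real ε ≥ 0, every pair of families of vectors (p_i)_{i∈ι}, (q_i)_{i∈ι} in H, and every real A ≥ 0 satisfying the discrete trace condition ∑_{i∈ι} h_i ‖p_i‖² ≤ C_I · A, one has: A − 2 ∑_{i∈ι} (γ h_i / (ε + γ h_i)) ⟨p_i, q_i⟩ + ∑_{i∈ι} (1 / (ε + γ h_i)) ‖q_i‖² − ∑_{i∈ι} (ε γ h_i / (ε + γ h_i)) ‖p_i‖² ≥ C · ( A + ∑_{i∈ι} (1 / (ε + h_i)) ‖q_i‖² ). -/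
/-- Abstract coercivity (stability) of the Nitsche bilinear form: if
`0 < γ < 1/C_I`, there is `C > 0` (depending only on `γ` and `C_I`) such that
for any real inner product space `H`, finite family of positive weights `h_i`,
`ε ≥ 0`, vectors `p_i, q_i` and `A ≥ 0` with the discrete trace condition
`∑ h_i ‖p_i‖² ≤ C_I A`, one has
`A − 2∑ (γh_i/(ε+γh_i))⟨p_i,q_i⟩ + ∑ (1/(ε+γh_i))‖q_i‖² − ∑ (εγh_i/(ε+γh_i))‖p_i‖²
  ≥ C (A + ∑ (1/(ε+h_i))‖q_i‖²)`. -/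
theorem nitsche_stability (C_I : ℝ) (hCI : 0 < C_I) (γ : ℝ) (hγ0 : 0 < γ)
    (hγ : γ < 1 / C_I) :
    ∃ C : ℝ, 0 < C ∧
      ∀ (H : Type) [NormedAddCommGroup H] [InnerProductSpace ℝ H]
        (ι : Type) [Fintype ι] (h : ι → ℝ), (∀ i, 0 < h i) →
        ∀ ε : ℝ, 0 ≤ ε →
        ∀ (p q : ι → H) (A : ℝ), 0 ≤ A →
        (∑ i, h i * ‖p i‖ ^ 2 ≤ C_I * A) →
        A - 2 * ∑ i, (γ * h i / (ε + γ * h i)) * (inner ℝ (p i) (q i) : ℝ)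
            + ∑ i, (1 / (ε + γ * h i)) * ‖q i‖ ^ 2
            - ∑ i, (ε * γ * h i / (ε + γ * h i)) * ‖p i‖ ^ 2
          ≥ C * (A + ∑ i, (1 / (ε + h i)) * ‖q i‖ ^ 2) := by
  have hγC : γ * C_I < 1 := by
    rw [lt_div_iff₀ hCI] at hγ; linarith
  obtain ⟨δ, hδ0, hδ1, hγCδ⟩ : ∃ δ : ℝ, 0 < δ ∧ δ < 1 ∧ γ * C_I < δ :=
    ⟨(γ * C_I + 1) / 2, by positivity, by linarith, by linarith⟩
  obtain ⟨m, hm1, hmγ, hm0⟩ : ∃ m : ℝ, 1 ≤ m ∧ γ ≤ m ∧ 0 < m :=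
    ⟨max 1 γ, le_max_left _ _, le_max_right _ _, lt_of_lt_of_le one_pos (le_max_left _ _)⟩
  obtain ⟨C, hC0, hC1, hC2⟩ :
      ∃ C : ℝ, 0 < C ∧ C ≤ 1 - γ * C_I / δ ∧ C ≤ (1 - δ) / m := by
    refine ⟨min (1 - γ * C_I / δ) ((1 - δ) / m), lt_min ?_ ?_, min_le_left _ _, min_le_right _ _⟩
    · have : γ * C_I / δ < 1 := (div_lt_one hδ0).mpr hγCδ
      linarith
    · exact div_pos (by linarith) hm0
  refine ⟨C, hC0, ?_⟩
  intro H _ _ ι _ h hh ε hε p q A hA htr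
  have key : ∀ i : ι,
      -(γ / δ) * (h i * ‖p i‖ ^ 2) + ((1 - δ) / m) * ((1 / (ε + h i)) * ‖q i‖ ^ 2)
      ≤ (1 / (ε + γ * h i)) * ‖q i‖ ^ 2
        - (ε * γ * h i / (ε + γ * h i)) * ‖p i‖ ^ 2
        - 2 * ((γ * h i / (ε + γ * h i)) * (inner ℝ (p i) (q i) : ℝ)) := by
    intro i
    have hhi := hh i
    have hs : 0 < ε + γ * h i := by positivity
    have hs2 : 0 < ε + h i := by positivity
    have hip : (inner ℝ (p i) (q i) : ℝ) ≤ ‖p i‖ * ‖q i‖ := real_inner_le_norm _ _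
    have hms : ε + γ * h i ≤ m * (ε + h i) := by
      have h1 : ε ≤ m * ε := le_mul_of_one_le_left hε hm1
      have h2 : γ * h i ≤ m * h i := mul_le_mul_of_nonneg_right hmγ hhi.le
      nlinarith
    have hcoef : (1 - δ) / m * (1 / (ε + h i)) ≤ (1 - δ) / (ε + γ * h i) := by
      rw [div_mul_div_comm, mul_one, div_le_div_iff₀ (by positivity) hs]
      nlinarith [mul_nonneg (by linarith : (0:ℝ) ≤ 1 - δ)
        (by linarith : (0:ℝ) ≤ m * (ε + h i) - (ε + γ * h i))]
    have step2 : ((1 - δ) / m) * ((1 / (ε + h i)) * ‖q i‖ ^ 2)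
        ≤ ((1 - δ) / (ε + γ * h i)) * ‖q i‖ ^ 2 := by
      have e : (1 - δ) / m * ((1 / (ε + h i)) * ‖q i‖ ^ 2)
          = ((1 - δ) / m * (1 / (ε + h i))) * ‖q i‖ ^ 2 := by ring
      rw [e]
      exact mul_le_mul_of_nonneg_right hcoef (sq_nonneg _)
    have step1 : -(γ / δ) * (h i * ‖p i‖ ^ 2) + ((1 - δ) / (ε + γ * h i)) * ‖q i‖ ^ 2
        ≤ (1 / (ε + γ * h i)) * ‖q i‖ ^ 2
          - (ε * γ * h i / (ε + γ * h i)) * ‖p i‖ ^ 2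
          - 2 * ((γ * h i / (ε + γ * h i)) * (inner ℝ (p i) (q i) : ℝ)) := by
      rw [← sub_nonneg]
      have hK : (0:ℝ) < (ε + γ * h i) * δ := by positivity
      rw [← mul_nonneg_iff_of_pos_right hK]
      have expand : ((1 / (ε + γ * h i)) * ‖q i‖ ^ 2
        - (ε * γ * h i / (ε + γ * h i)) * ‖p i‖ ^ 2
        - 2 * ((γ * h i / (ε + γ * h i)) * (inner ℝ (p i) (q i) : ℝ))
        - (-(γ / δ) * (h i * ‖p i‖ ^ 2) + ((1 - δ) / (ε + γ * h i)) * ‖q i‖ ^ 2))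
        * ((ε + γ * h i) * δ)
        = δ ^ 2 * ‖q i‖ ^ 2 - 2 * δ * (γ * h i) * (inner ℝ (p i) (q i) : ℝ)
          + γ * h i * (ε * (1 - δ) + γ * h i) * ‖p i‖ ^ 2 := by
        field_simp
        ring
      rw [expand]
      nlinarith [sq_nonneg (δ * ‖q i‖ - γ * h i * ‖p i‖),
        mul_nonneg (mul_nonneg (mul_nonneg hγ0.le hhi.le) (mul_nonneg hε (by linarith : (0:ℝ) ≤ 1 - δ))) (sq_nonneg ‖p i‖),
        mul_le_mul_of_nonneg_left hip (by positivity : (0:ℝ) ≤ 2 * δ * (γ * h i))]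
    linarith [step1, step2]
  have sum_key := Finset.sum_le_sum (s := Finset.univ) (fun i _ => key i)
  rw [Finset.sum_add_distrib] at sum_key
  simp only [Finset.sum_sub_distrib, ← Finset.mul_sum] at sum_key
  have hS : (0:ℝ) ≤ ∑ i, (1 / (ε + h i)) * ‖q i‖ ^ 2 := by
    apply Finset.sum_nonneg
    intro i _
    have := hh i
    positivity
  set S := ∑ i, (1 / (ε + h i)) * ‖q i‖ ^ 2
  have htr' : -(γ / δ) * (C_I * A) ≤ -(γ / δ) * ∑ i, h i * ‖p i‖ ^ 2 := by
    apply mul_le_mul_of_nonpos_left htr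
    have : 0 < γ / δ := by positivity
    linarith
  have hCA : C * A ≤ (1 - γ * C_I / δ) * A := mul_le_mul_of_nonneg_right hC1 hA
  have hCS : C * S ≤ ((1 - δ) / m) * S := mul_le_mul_of_nonneg_right hC2 hS
  have heq : (1 - γ * C_I / δ) * A = A - (γ / δ) * (C_I * A) := by ring
  have heq2 : C * (A + S) = C * A + C * S := by ring
  linarith [sum_key, htr', hCA, hCS, heq, heq2]
end

section
/- Let H be a real inner product space, ι a finite index set, γ > 0 a real number, ε > 0 a real number, and (h_i)_{i∈ι} a family of positive reals satisfying h_i ≤ ε for every i ∈ ι. Then for all families of vectors (R_i)_{i∈ι}, (e_i)_{i∈ι} and (w_i)_{i∈ι} in H, one has ∑_{i∈ι} [ −(γ h_i / ((ε + γ h_i) ε)) ⟨R_i, w_i⟩ − (1/ε) ⟨e_i, w_i⟩ ] ≤ [ √2 · γ · ( ∑_{i∈ι} (h_i / (ε + γ h_i)²) ‖R_i‖² )^{1/2} + 2 · ( ∑_{i∈ι} (1 / (ε + h_i)) ‖e_i‖² )^{1/2} ] · ( ∑_{i∈ι} (1 / (ε + h_i)) ‖w_i‖² )^{1/2}. -/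
/-- Abstract form of the estimates on the part `Γ ∖ Γ_ε` of the boundary
(edges with `h_E ≤ ε`):
`∑ [−(γh_i/((ε+γh_i)ε))⟨R_i,w_i⟩ − (1/ε)⟨e_i,w_i⟩]
  ≤ [√2 γ (∑ (h_i/(ε+γh_i)²)‖R_i‖²)^{1/2} + 2 (∑ (1/(ε+h_i))‖e_i‖²)^{1/2}]
      · (∑ (1/(ε+h_i))‖w_i‖²)^{1/2}`. -/
theorem boundary_small_edge_estimate {H : Type*} [NormedAddCommGroup H]
    [InnerProductSpace ℝ H] {ι : Type*} [Fintype ι]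
    (γ ε : ℝ) (hγ : 0 < γ) (hε : 0 < ε)
    (h : ι → ℝ) (hh : ∀ i, 0 < h i) (hhε : ∀ i, h i ≤ ε)
    (R e w : ι → H) :
    ∑ i, (-(γ * h i / ((ε + γ * h i) * ε)) * (inner ℝ (R i) (w i) : ℝ)
        - (1 / ε) * (inner ℝ (e i) (w i) : ℝ)) ≤
      (Real.sqrt 2 * γ * Real.sqrt (∑ i, (h i / (ε + γ * h i) ^ 2) * ‖R i‖ ^ 2)
          + 2 * Real.sqrt (∑ i, (1 / (ε + h i)) * ‖e i‖ ^ 2)) *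
        Real.sqrt (∑ i, (1 / (ε + h i)) * ‖w i‖ ^ 2) := by
  set a : ι → ℝ := fun i => Real.sqrt (h i) / (ε + γ * h i) * ‖R i‖ with ha
  set b : ι → ℝ := fun i => ‖w i‖ / Real.sqrt (ε + h i) with hb
  set c : ι → ℝ := fun i => ‖e i‖ / Real.sqrt (ε + h i) with hc
  have key : ∀ i, -(γ * h i / ((ε + γ * h i) * ε)) * (inner ℝ (R i) (w i) : ℝ)
      - (1 / ε) * (inner ℝ (e i) (w i) : ℝ)
      ≤ Real.sqrt 2 * γ * (a i * b i) + 2 * (c i * b i) := by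
    intro i
    have hhi := hh i
    have hεγ : 0 < ε + γ * h i := by positivity
    have hεh : 0 < ε + h i := by positivity
    set s := Real.sqrt (h i) with hs
    set t := Real.sqrt (ε + h i) with ht
    have hs0 : 0 ≤ s := Real.sqrt_nonneg _
    have ht0 : 0 < t := Real.sqrt_pos.2 hεh
    have hs2 : s ^ 2 = h i := Real.sq_sqrt hhi.le
    have ht2 : t ^ 2 = ε + h i := Real.sq_sqrt hεh.le
    have hst : s * t ≤ Real.sqrt 2 * ε := by
      have : s * t = Real.sqrt (h i * (ε + h i)) := (Real.sqrt_mul hhi.le _).symm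
      rw [this]
      calc Real.sqrt (h i * (ε + h i)) ≤ Real.sqrt (2 * ε ^ 2) := by
            apply Real.sqrt_le_sqrt; nlinarith [hhε i]
        _ = Real.sqrt 2 * ε := by
            rw [Real.sqrt_mul (by norm_num), Real.sqrt_sq hε.le]
    have hiR : -(inner ℝ (R i) (w i) : ℝ) ≤ ‖R i‖ * ‖w i‖ := by
      have h1 := abs_real_inner_le_norm (R i) (w i)
      have h2 := neg_abs_le (inner ℝ (R i) (w i) : ℝ)
      linarith
    have hiE : -(inner ℝ (e i) (w i) : ℝ) ≤ ‖e i‖ * ‖w i‖ := by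
      have h1 := abs_real_inner_le_norm (e i) (w i)
      have h2 := neg_abs_le (inner ℝ (e i) (w i) : ℝ)
      linarith
    have term1 : -(γ * h i / ((ε + γ * h i) * ε)) * (inner ℝ (R i) (w i) : ℝ)
        ≤ Real.sqrt 2 * γ * (a i * b i) := by
      have k1 : (0:ℝ) ≤ γ * h i / ((ε + γ * h i) * ε) := by positivity
      calc -(γ * h i / ((ε + γ * h i) * ε)) * (inner ℝ (R i) (w i) : ℝ)
          = γ * h i / ((ε + γ * h i) * ε) * (-(inner ℝ (R i) (w i) : ℝ)) := by ring
        _ ≤ γ * h i / ((ε + γ * h i) * ε) * (‖R i‖ * ‖w i‖) :=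
            mul_le_mul_of_nonneg_left hiR k1
        _ ≤ Real.sqrt 2 * γ * s / ((ε + γ * h i) * t) * (‖R i‖ * ‖w i‖) := by
            apply mul_le_mul_of_nonneg_right _ (by positivity)
            rw [div_le_div_iff₀ (by positivity) (by positivity)]
            have hm := mul_le_mul_of_nonneg_left hst
              (by positivity : (0:ℝ) ≤ γ * s * (ε + γ * h i))
            have hL : γ * h i * ((ε + γ * h i) * t)
                = γ * s * (ε + γ * h i) * (s * t) := by rw [← hs2]; ring
            have hR : Real.sqrt 2 * γ * s * ((ε + γ * h i) * ε)
                = γ * s * (ε + γ * h i) * (Real.sqrt 2 * ε) := by ring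
            rw [hL, hR]; exact hm
        _ = Real.sqrt 2 * γ * (a i * b i) := by
            simp only [ha, hb]
            field_simp
            ring
    have term2 : -((1 / ε) * (inner ℝ (e i) (w i) : ℝ)) ≤ 2 * (c i * b i) := by
      have k2 : (0:ℝ) ≤ 1 / ε := by positivity
      calc -((1 / ε) * (inner ℝ (e i) (w i) : ℝ))
          = (1 / ε) * (-(inner ℝ (e i) (w i) : ℝ)) := by ring
        _ ≤ (1 / ε) * (‖e i‖ * ‖w i‖) := mul_le_mul_of_nonneg_left hiE k2
        _ ≤ (2 / (ε + h i)) * (‖e i‖ * ‖w i‖) := by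
            apply mul_le_mul_of_nonneg_right _ (by positivity)
            rw [div_le_div_iff₀ hε hεh]
            nlinarith [hhε i]
        _ = 2 * (c i * b i) := by
            simp only [hc, hb]
            rw [div_mul_div_comm, Real.mul_self_sqrt hεh.le]
            ring
    linarith
  have csR : ∑ i, a i * b i ≤
      Real.sqrt (∑ i, (h i / (ε + γ * h i) ^ 2) * ‖R i‖ ^ 2) *
      Real.sqrt (∑ i, (1 / (ε + h i)) * ‖w i‖ ^ 2) := by
    have := Real.sum_mul_le_sqrt_mul_sqrt Finset.univ a b
    have e1 : ∑ i, a i ^ 2 = ∑ i, (h i / (ε + γ * h i) ^ 2) * ‖R i‖ ^ 2 := by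
      apply Finset.sum_congr rfl
      intro i _
      simp only [ha, mul_pow, div_pow, Real.sq_sqrt (hh i).le]
    have e2 : ∑ i, b i ^ 2 = ∑ i, (1 / (ε + h i)) * ‖w i‖ ^ 2 := by
      apply Finset.sum_congr rfl
      intro i _
      have hεh : 0 < ε + h i := add_pos hε (hh i)
      simp only [hb, div_pow, Real.sq_sqrt hεh.le]
      field_simp
    rwa [e1, e2] at this
  have csE : ∑ i, c i * b i ≤
      Real.sqrt (∑ i, (1 / (ε + h i)) * ‖e i‖ ^ 2) *
      Real.sqrt (∑ i, (1 / (ε + h i)) * ‖w i‖ ^ 2) := by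
    have := Real.sum_mul_le_sqrt_mul_sqrt Finset.univ c b
    have e1 : ∑ i, c i ^ 2 = ∑ i, (1 / (ε + h i)) * ‖e i‖ ^ 2 := by
      apply Finset.sum_congr rfl
      intro i _
      have hεh : 0 < ε + h i := add_pos hε (hh i)
      simp only [hc, div_pow, Real.sq_sqrt hεh.le]
      field_simp
    have e2 : ∑ i, b i ^ 2 = ∑ i, (1 / (ε + h i)) * ‖w i‖ ^ 2 := by
      apply Finset.sum_congr rfl
      intro i _
      have hεh : 0 < ε + h i := add_pos hε (hh i)
      simp only [hb, div_pow, Real.sq_sqrt hεh.le]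
      field_simp
    rwa [e1, e2] at this
  calc ∑ i, (-(γ * h i / ((ε + γ * h i) * ε)) * (inner ℝ (R i) (w i) : ℝ)
        - (1 / ε) * (inner ℝ (e i) (w i) : ℝ))
      ≤ ∑ i, (Real.sqrt 2 * γ * (a i * b i) + 2 * (c i * b i)) :=
        Finset.sum_le_sum fun i _ => key i
    _ = Real.sqrt 2 * γ * (∑ i, a i * b i) + 2 * (∑ i, c i * b i) := by
        rw [Finset.sum_add_distrib, ← Finset.mul_sum, ← Finset.mul_sum]
    _ ≤ Real.sqrt 2 * γ * (Real.sqrt (∑ i, (h i / (ε + γ * h i) ^ 2) * ‖R i‖ ^ 2) *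
          Real.sqrt (∑ i, (1 / (ε + h i)) * ‖w i‖ ^ 2))
        + 2 * (Real.sqrt (∑ i, (1 / (ε + h i)) * ‖e i‖ ^ 2) *
          Real.sqrt (∑ i, (1 / (ε + h i)) * ‖w i‖ ^ 2)) := by
        gcongr
    _ = (Real.sqrt 2 * γ * Real.sqrt (∑ i, (h i / (ε + γ * h i) ^ 2) * ‖R i‖ ^ 2)
          + 2 * Real.sqrt (∑ i, (1 / (ε + h i)) * ‖e i‖ ^ 2)) *
        Real.sqrt (∑ i, (1 / (ε + h i)) * ‖w i‖ ^ 2) := by ring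
end
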